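/- arXiv:1909.04231 — 2 statements merged into one kernel-verified Lean document; each statement's English description precedes it below -/
import Mathlib

section
/- For every real p with 0 ≤ p < φ, the probability that Player 2 wins the random game of depth n tends to 1: lim_{n→∞} μ_{n,p}({a : V_n(a) = false}) = 1. -/
open Filter Topology

noncomputable def phi : ℝ := (Real.sqrt 5 - 1) / 2

def gameValue : (n : ℕ) → (Fin (2 ^ n) → Bool) → Bool
  | 0, a => a 0
  | n + 1, a =>
      have h : 2 ^ (n + 1) = 2 ^ n + 2 ^ n := by rw [pow_succ]; omega
      let aL : Fin (2 ^ n) → Bool := fun i => a ⟨i.1, by have := i.2; omega⟩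
      let aR : Fin (2 ^ n) → Bool := fun i => a ⟨i.1 + 2 ^ n, by have := i.2; omega⟩
      if (n + 1) % 2 = 1 then gameValue n aL && gameValue n aR
      else gameValue n aL || gameValue n aR

noncomputable def prob (n : ℕ) (p : ℝ) (S : Set (Fin (2 ^ n) → Bool)) : ℝ :=
  ∑ a : Fin (2 ^ n) → Bool, S.indicator (fun a => ∏ i, if a i then p else 1 - p) a

noncomputable def w (n : ℕ) (p : ℝ) (a : Fin (2 ^ n) → Bool) : ℝ :=
  ∏ i, if a i then p else 1 - p

def aL (n : ℕ) (a : Fin (2 ^ (n + 1)) → Bool) (i : Fin (2 ^ n)) : Bool :=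
  a ⟨i.1, by have h : 2 ^ (n + 1) = 2 ^ n + 2 ^ n := by rw [pow_succ]; omega
             have := i.2; omega⟩

def aR (n : ℕ) (a : Fin (2 ^ (n + 1)) → Bool) (i : Fin (2 ^ n)) : Bool :=
  a ⟨i.1 + 2 ^ n, by have h : 2 ^ (n + 1) = 2 ^ n + 2 ^ n := by rw [pow_succ]; omega
                     have := i.2; omega⟩

lemma gameValue_succ (n : ℕ) (a : Fin (2 ^ (n + 1)) → Bool) :
    gameValue (n + 1) a =
      if (n + 1) % 2 = 1 then gameValue n (aL n a) && gameValue n (aR n a)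
      else gameValue n (aL n a) || gameValue n (aR n a) := rfl

def splitEquiv (n : ℕ) : (Fin (2 ^ (n + 1)) → Bool) ≃ (Fin (2 ^ n) → Bool) × (Fin (2 ^ n) → Bool) where
  toFun a := (aL n a, aR n a)
  invFun bc j :=
    if h : j.1 < 2 ^ n then bc.1 ⟨j.1, h⟩
    else bc.2 ⟨j.1 - 2 ^ n, by
      have h2 : 2 ^ (n + 1) = 2 ^ n + 2 ^ n := by rw [pow_succ]; omega
      have := j.2; omega⟩
  left_inv a := by
    funext j
    by_cases h : j.1 < 2 ^ n
    · simp only [dif_pos h, aL]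
    · simp only [dif_neg h, aR]
      exact congrArg a (Fin.ext (show (j : ℕ) - 2 ^ n + 2 ^ n = (j : ℕ) by omega))
  right_inv bc := by
    ext i
    · show (if h : (i : ℕ) < 2 ^ n then _ else _) = _
      rw [dif_pos i.2]
    · show (if h : (i : ℕ) + 2 ^ n < 2 ^ n then _ else _) = _
      rw [dif_neg (by omega)]
      exact congrArg bc.2 (Fin.ext (show (i : ℕ) + 2 ^ n - 2 ^ n = (i : ℕ) by omega))

lemma sum_split (n : ℕ) (p : ℝ) (G : (Fin (2 ^ n) → Bool) → (Fin (2 ^ n) → Bool) → ℝ) :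
    ∑ a : Fin (2 ^ (n + 1)) → Bool, G (aL n a) (aR n a) = ∑ b, ∑ c, G b c := by
  have h := Equiv.sum_comp (splitEquiv n) (fun bc : (Fin (2 ^ n) → Bool) × (Fin (2 ^ n) → Bool) => G bc.1 bc.2)
  rw [Fintype.sum_prod_type] at h
  exact h

lemma w_split (n : ℕ) (p : ℝ) (a : Fin (2 ^ (n + 1)) → Bool) :
    w (n + 1) p a = w n p (aL n a) * w n p (aR n a) := by
  have h : 2 ^ (n + 1) = 2 ^ n + 2 ^ n := by rw [pow_succ]; omega
  unfold w
  rw [Fintype.prod_equiv (finCongr h) (fun i => if a i then p else 1 - p)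
    (fun j => if a (finCongr h.symm j) then p else 1 - p) (fun i => by simp)]
  rw [Fin.prod_univ_add]
  refine congrArg₂ (· * ·) (Finset.prod_congr rfl fun i _ => ?_) (Finset.prod_congr rfl fun i _ => ?_)
  · have e : a ((finCongr h.symm) (Fin.castAdd (2 ^ n) i)) = aL n a i := by
      unfold aL; exact congrArg a (Fin.ext (by simp))
    rw [e]
  · have e : a ((finCongr h.symm) (Fin.natAdd (2 ^ n) i)) = aR n a i := by
      unfold aR; exact congrArg a (Fin.ext (by simp [add_comm]))
    rw [e]

noncomputable def m (n : ℕ) (p : ℝ) (b : Bool) : ℝ :=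
  ∑ a : Fin (2 ^ n) → Bool, w n p a * (if gameValue n a = b then 1 else 0)

lemma sum_w (n : ℕ) (p : ℝ) : ∑ a : Fin (2 ^ n) → Bool, w n p a = 1 := by
  induction n with
  | zero =>
      haveI : Unique (Fin (2 ^ 0)) := ⟨⟨⟨0, by norm_num⟩⟩, fun a => Fin.ext (by omega)⟩
      rw [← Equiv.sum_comp (Equiv.funUnique (Fin (2 ^ 0)) Bool).symm (w 0 p)]
      simp only [Fintype.sum_bool, Equiv.funUnique_symm_apply, w]
      simp [Finset.univ_unique, uniqueElim]
  | succ n ih =>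
      calc ∑ a : Fin (2 ^ (n + 1)) → Bool, w (n + 1) p a
          = ∑ a : Fin (2 ^ (n + 1)) → Bool, w n p (aL n a) * w n p (aR n a) :=
            Finset.sum_congr rfl fun a _ => w_split n p a
        _ = ∑ b, ∑ c, w n p b * w n p c := sum_split n p (fun b c => w n p b * w n p c)
        _ = (∑ b, w n p b) * (∑ c, w n p c) := (Finset.sum_mul_sum _ _ _ _).symm
        _ = 1 := by rw [ih]; ring

lemma m_add (n : ℕ) (p : ℝ) : m n p true + m n p false = 1 := by
  unfold m
  rw [← Finset.sum_add_distrib]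
  rw [Finset.sum_congr rfl (fun a _ => show
      w n p a * (if gameValue n a = true then 1 else 0) +
        w n p a * (if gameValue n a = false then 1 else 0) = w n p a by
    cases h : gameValue n a <;> simp [h]), sum_w]

lemma m_true_odd (n : ℕ) (p : ℝ) (h : (n + 1) % 2 = 1) :
    m (n + 1) p true = m n p true * m n p true := by
  unfold m
  rw [show (∑ a : Fin (2 ^ (n + 1)) → Bool, w (n + 1) p a * (if gameValue (n + 1) a = true then 1 else 0))
      = ∑ a : Fin (2 ^ (n + 1)) → Bool,
          (w n p (aL n a) * (if gameValue n (aL n a) = true then 1 else 0)) *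
          (w n p (aR n a) * (if gameValue n (aR n a) = true then 1 else 0)) from
    Finset.sum_congr rfl fun a _ => by
      rw [w_split n p a, gameValue_succ, if_pos h]
      cases gameValue n (aL n a) <;> cases gameValue n (aR n a) <;> simp <;> ring]
  rw [sum_split n p (fun b c => (w n p b * (if gameValue n b = true then 1 else 0)) *
        (w n p c * (if gameValue n c = true then 1 else 0)))]
  rw [← Finset.sum_mul_sum]

lemma m_false_even (n : ℕ) (p : ℝ) (h : ¬ (n + 1) % 2 = 1) :
    m (n + 1) p false = m n p false * m n p false := by
  unfold m
  rw [show (∑ a : Fin (2 ^ (n + 1)) → Bool, w (n + 1) p a * (if gameValue (n + 1) a = false then 1 else 0))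
      = ∑ a : Fin (2 ^ (n + 1)) → Bool,
          (w n p (aL n a) * (if gameValue n (aL n a) = false then 1 else 0)) *
          (w n p (aR n a) * (if gameValue n (aR n a) = false then 1 else 0)) from
    Finset.sum_congr rfl fun a _ => by
      rw [w_split n p a, gameValue_succ, if_neg h]
      cases gameValue n (aL n a) <;> cases gameValue n (aR n a) <;> simp <;> ring]
  rw [sum_split n p (fun b c => (w n p b * (if gameValue n b = false then 1 else 0)) *
        (w n p c * (if gameValue n c = false then 1 else 0)))]
  rw [← Finset.sum_mul_sum]

noncomputable def q (p : ℝ) : ℕ → ℝ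
  | 0 => p
  | n + 1 => if (n + 1) % 2 = 1 then (q p n) ^ 2 else 1 - (1 - q p n) ^ 2

lemma m_eq_q (n : ℕ) (p : ℝ) : m n p true = q p n := by
  induction n with
  | zero =>
      haveI : Unique (Fin (2 ^ 0)) := ⟨⟨⟨0, by norm_num⟩⟩, fun a => Fin.ext (by omega)⟩
      unfold m q
      rw [← Equiv.sum_comp (Equiv.funUnique (Fin (2 ^ 0)) Bool).symm
        (fun a => w 0 p a * (if gameValue 0 a = true then 1 else 0))]
      simp only [Fintype.sum_bool, Equiv.funUnique_symm_apply, w]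
      simp [Finset.univ_unique, uniqueElim, gameValue]
  | succ n ih =>
      by_cases h : (n + 1) % 2 = 1
      · rw [m_true_odd n p h, ih]
        simp [q, h]; ring
      · have h1 : m (n + 1) p true = 1 - m (n + 1) p false := by
          have := m_add (n + 1) p; linarith
        have h2 : m n p false = 1 - m n p true := by
          have := m_add n p; linarith
        rw [h1, m_false_even n p h, h2, ih]
        simp [q, h]; ring

lemma prob_false (n : ℕ) (p : ℝ) :
    prob n p {a | gameValue n a = false} = 1 - q p n := by
  have h1 : prob n p {a | gameValue n a = false} = m n p false := by
    unfold prob m w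
    refine Finset.sum_congr rfl fun a _ => ?_
    classical
    rw [Set.indicator_apply]
    by_cases h : gameValue n a = false <;> simp [h, Set.mem_setOf_eq]
  have h2 := m_add n p
  rw [h1, ← m_eq_q]
  linarith

lemma q_even_odd (p : ℝ) (k : ℕ) : q p (2 * k + 1) = q p (2 * k) ^ 2 := by
  have h : (2 * k + 1) % 2 = 1 := by omega
  simp [q, h]

lemma q_even_succ (p : ℝ) (k : ℕ) : q p (2 * (k + 1)) = 1 - (1 - q p (2 * k + 1)) ^ 2 := by
  have e : 2 * (k + 1) = (2 * k + 1) + 1 := by ring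
  have h : ¬ ((2 * k + 1) + 1) % 2 = 1 := by omega
  rw [e]
  simp only [q]
  rw [if_neg h]

set_option maxHeartbeats 1600000 in
/-- For every `p` with `0 ≤ p < φ`, the probability that Player 2 wins the depth-`n`
random game tends to `1` as `n → ∞`. -/
theorem player_two_wins_asymptotically (p : ℝ) (hp : 0 ≤ p) (hp' : p < phi) :
    Tendsto (fun n => prob n p {a | gameValue n a = false}) atTop (𝓝 1) := by
  have h5 : Real.sqrt 5 ^ 2 = 5 := Real.sq_sqrt (by norm_num)
  have h5n : 0 ≤ Real.sqrt 5 := Real.sqrt_nonneg 5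
  have hphi : phi * phi + phi = 1 := by unfold phi; nlinarith
  have hphih : (1 : ℝ) / 2 < phi := by unfold phi; nlinarith
  have hphi1 : phi < 1 := by unfold phi; nlinarith
  have hp1 : p < 1 := lt_trans hp' hphi1
  have hkey : p * p + p < 1 := by nlinarith
  have hp2 : p ^ 2 < 1 / 2 := by nlinarith
  set c := p * (2 - p ^ 2) with hc
  have hc0 : 0 ≤ c := by nlinarith
  have hc1 : c < 1 := by nlinarith [mul_pos (show (0:ℝ) < 1 - p by linarith) (show (0:ℝ) < 1 - p - p * p by linarith)]
  -- bounds on even-indexed q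
  have hq2 : ∀ k, 0 ≤ q p (2 * k) ∧ q p (2 * k) ≤ p ∧ q p (2 * k) ≤ p * c ^ k := by
    intro k
    induction k with
    | zero => simp [q, hp]
    | succ k ih =>
        obtain ⟨h0, h1, h2⟩ := ih
        set x := q p (2 * k) with hx
        have hx2 : q p (2 * (k + 1)) = x ^ 2 * (2 - x ^ 2) := by
          rw [q_even_succ, q_even_odd]; ring
        have hckn : (0:ℝ) ≤ c ^ k := pow_nonneg hc0 k
        have hg : x * (2 - x ^ 2) ≤ p * (2 - p ^ 2) := by
          nlinarith [mul_nonneg (show (0:ℝ) ≤ p - x by linarith)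
            (show (0:ℝ) ≤ 2 - p ^ 2 - p * x - x ^ 2 by nlinarith)]
        have hgz : (0:ℝ) ≤ x * (2 - x ^ 2) := by nlinarith
        refine ⟨by rw [hx2]; nlinarith, ?_, ?_⟩
        · rw [hx2]; nlinarith
        · rw [hx2, pow_succ]
          calc x ^ 2 * (2 - x ^ 2) = x * (x * (2 - x ^ 2)) := by ring
            _ ≤ (p * c ^ k) * (p * (2 - p ^ 2)) := by
                refine mul_le_mul h2 hg hgz (by positivity)
            _ = p * (c ^ k * c) := by rw [hc]; ring
  have hqb : ∀ n, 0 ≤ q p n ∧ q p n ≤ p * c ^ (n / 2) := by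
    intro n
    rcases Nat.even_or_odd n with ⟨k, hk⟩ | ⟨k, hk⟩
    · have hk' : n = 2 * k := by omega
      obtain ⟨h0, h1, h2⟩ := hq2 k
      rw [hk', show 2 * k / 2 = k from by omega]; exact ⟨h0, h2⟩
    · have hk' : n = 2 * k + 1 := by omega
      obtain ⟨h0, h1, h2⟩ := hq2 k
      rw [hk', show (2 * k + 1) / 2 = k from by omega, q_even_odd]
      constructor
      · positivity
      · nlinarith
  have hdiv : Tendsto (fun n : ℕ => n / 2) atTop atTop :=
    tendsto_atTop_atTop.mpr fun b => ⟨2 * b, fun n hn => by omega⟩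
  have hgeo : Tendsto (fun n : ℕ => p * c ^ (n / 2)) atTop (𝓝 0) := by
    have := ((tendsto_pow_atTop_nhds_zero_of_lt_one hc0 hc1).comp hdiv).const_mul p
    simpa using this
  have hq0 : Tendsto (fun n => q p n) atTop (𝓝 0) :=
    squeeze_zero (fun n => (hqb n).1) (fun n => (hqb n).2) hgeo
  have : Tendsto (fun n => 1 - q p n) atTop (𝓝 1) := by
    simpa using tendsto_const_nhds.sub hq0
  simpa only [prob_false] using this
end

section
/- For every real x with φ² < x ≤ 1, the sequence of iterates g^[n](x) (g applied n times to x) is nondecreasing in n and converges to 1 as n → ∞. -/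
open Filter Topology

/-- The two-level recursion map `g(x) = (1 − (1 − x)²)² = x⁴ − 4x³ + 4x²`. -/
def g (x : ℝ) : ℝ := (1 - (1 - x) ^ 2) ^ 2

lemma sqrt5_sq : Real.sqrt 5 ^ 2 = 5 := Real.sq_sqrt (by norm_num)

lemma sqrt5_gt : (2:ℝ) < Real.sqrt 5 := by
  nlinarith [sqrt5_sq, Real.sqrt_nonneg 5]

lemma sqrt5_lt : Real.sqrt 5 < 3 := by
  nlinarith [sqrt5_sq, Real.sqrt_nonneg 5]

lemma phi_sq : phi ^ 2 = (3 - Real.sqrt 5) / 2 := by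
  unfold phi; nlinarith [sqrt5_sq]

lemma g_facts (y : ℝ) (h1 : phi ^ 2 < y) (h2 : y ≤ 1) : y ≤ g y ∧ g y ≤ 1 := by
  rw [phi_sq] at h1
  have hs := sqrt5_sq
  have h5 := sqrt5_gt
  have h5' := sqrt5_lt
  have hy : 0 < y := by nlinarith
  have hfac : y * y - 3 * y + 1 ≤ 0 := by
    nlinarith [mul_pos (show (0:ℝ) < y - (3 - Real.sqrt 5)/2 by linarith)
      (show (0:ℝ) < (3 + Real.sqrt 5)/2 - y by nlinarith)]
  constructor
  · have key : 0 ≤ y * ((1 - y) * (-(y * y - 3 * y + 1))) :=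
      mul_nonneg hy.le (mul_nonneg (by linarith) (by linarith))
    unfold g; nlinarith [key]
  · have ht : (1 - y) ^ 2 ≤ 1 := by nlinarith
    have ht0 : 0 ≤ (1 - y) ^ 2 := sq_nonneg _
    unfold g
    nlinarith [mul_nonneg ht0 (show (0:ℝ) ≤ 2 - (1 - y)^2 by linarith)]

lemma g_strict (y : ℝ) (h1 : phi ^ 2 < y) (h2 : y < 1) : y < g y := by
  rw [phi_sq] at h1
  have hs := sqrt5_sq
  have h5 := sqrt5_gt
  have h5' := sqrt5_lt
  have hy : 0 < y := by nlinarith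
  have hfac : y * y - 3 * y + 1 < 0 := by
    nlinarith [mul_pos (show (0:ℝ) < y - (3 - Real.sqrt 5)/2 by linarith)
      (show (0:ℝ) < (3 + Real.sqrt 5)/2 - y by nlinarith)]
  have key : 0 < y * ((1 - y) * (-(y * y - 3 * y + 1))) :=
    mul_pos hy (mul_pos (by linarith) (by linarith))
  unfold g; nlinarith [key]

/-- For `φ² < x ≤ 1` the iterates `g^[n](x)` are nondecreasing in `n` and converge to `1`. -/
theorem g_iterates_tendsto_one (x : ℝ) (h1 : phi ^ 2 < x) (h2 : x ≤ 1) :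
    Monotone (fun n => g^[n] x) ∧ Tendsto (fun n => g^[n] x) atTop (𝓝 1) := by
  have inv : ∀ n, phi ^ 2 < g^[n] x ∧ g^[n] x ≤ 1 := by
    intro n
    induction n with
    | zero => exact ⟨h1, h2⟩
    | succ n ih =>
      rw [Function.iterate_succ_apply']
      obtain ⟨s1, s2⟩ := g_facts _ ih.1 ih.2
      exact ⟨lt_of_lt_of_le ih.1 s1, s2⟩
  have hmono : Monotone (fun n => g^[n] x) := by
    apply monotone_nat_of_le_succ
    intro n
    simp only [Function.iterate_succ_apply']
    exact (g_facts _ (inv n).1 (inv n).2).1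
  have hbdd : BddAbove (Set.range fun n => g^[n] x) :=
    ⟨1, by rintro _ ⟨n, rfl⟩; exact (inv n).2⟩
  have htend : Tendsto (fun n => g^[n] x) atTop (𝓝 (⨆ n, g^[n] x)) :=
    tendsto_atTop_ciSup hmono hbdd
  set L := ⨆ n, g^[n] x with hLdef
  have hg : Continuous g := by unfold g; continuity
  have h2' : Tendsto (fun n => g^[n + 1] x) atTop (𝓝 L) :=
    htend.comp (tendsto_add_atTop_nat 1)
  have h3 : Tendsto (fun n => g (g^[n] x)) atTop (𝓝 (g L)) :=
    (hg.tendsto L).comp htend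
  have hfix : g L = L :=
    tendsto_nhds_unique h3 (by simpa [Function.iterate_succ_apply'] using h2')
  have hL1 : L ≤ 1 := ciSup_le fun n => (inv n).2
  have hLx : phi ^ 2 < L := by
    have := le_ciSup hbdd 0
    simp only [Function.iterate_zero_apply] at this
    exact lt_of_lt_of_le h1 this
  have hLeq : L = 1 := by
    rcases lt_or_eq_of_le hL1 with h | h
    · exact absurd hfix (ne_of_gt (g_strict L hLx h))
    · exact h
  exact ⟨hmono, hLeq ▸ htend⟩
end
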